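/- arXiv:2410.24113 — 5 statements merged into one kernel-verified Lean document; each statement's English description precedes it below -/
import Mathlib

section
/- Let X be a complex vector space and let Φ : X × X → L²(Ω, μ) be a sesquilinear map (linear in the first argument, conjugate-linear in the second) such that Φ(x,x) ≥ 0 almost everywhere for every x ∈ X. Then for all x₁, x₂ ∈ X one has ‖Φ(x₁,x₂)‖₂ ≤ ‖Φ(x₁,x₁)‖₂^{1/2} · ‖Φ(x₂,x₂)‖₂^{1/2}. -/
open MeasureTheory
open scoped ComplexOrder InnerProductSpace

private lemma denseRange_ratComplex :
    DenseRange (fun q : ℚ × ℚ => ((q.1 : ℂ) + (q.2 : ℂ) * Complex.I)) := by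
  have h1 : DenseRange (Prod.map ((↑) : ℚ → ℝ) ((↑) : ℚ → ℝ)) :=
    Rat.denseRange_cast.prodMap Rat.denseRange_cast
  have hc : Continuous (fun p : ℝ × ℝ => (p.1 : ℂ) + (p.2 : ℂ) * Complex.I) := by fun_prop
  have hsurj : Function.Surjective (fun p : ℝ × ℝ => (p.1 : ℂ) + (p.2 : ℂ) * Complex.I) :=
    fun z => ⟨(z.re, z.im), by simp [Complex.re_add_im]⟩
  have h2 := (hsurj.denseRange).comp h1 hc
  exact h2


private lemma pointwise_cs {A B C D : ℂ} (hA : 0 ≤ A) (hC : 0 ≤ C)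
    (h : ∀ z : ℂ, 0 ≤ A + (starRingEnd ℂ z) * B + (z * D + (z * starRingEnd ℂ z) * C)) :
    Complex.normSq B ≤ A.re * C.re := by
  rw [Complex.nonneg_iff] at hA hC
  obtain ⟨hAre, hAim⟩ := hA
  obtain ⟨hCre, hCim⟩ := hC
  have h1 := (Complex.nonneg_iff.mp (h 1)).2
  have hI := (Complex.nonneg_iff.mp (h Complex.I)).2
  simp [Complex.add_im, Complex.mul_im, ← hAim, ← hCim] at h1 hI
  have key : ∀ r : ℝ, 0 ≤ A.re - 2*r*Complex.normSq B + r^2 * Complex.normSq B * C.re := by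
    intro r
    have h0 := (Complex.nonneg_iff.mp (h (-(r:ℂ) * B))).1
    simp [Complex.add_re, Complex.mul_re, Complex.mul_im, ← hAim, ← hCim,
      Complex.normSq_apply] at h0 ⊢
    rw [show D.im = -B.im by linarith, show D.re = B.re by linarith] at h0
    ring_nf at h0 ⊢
    linarith
  have hu : 0 ≤ Complex.normSq B := Complex.normSq_nonneg B
  rcases eq_or_lt_of_le hCre with hk | hk
  · rcases eq_or_lt_of_le hu with hu0 | hu0
    · nlinarith
    · exfalso
      have hr := key ((A.re + 1) / (2 * Complex.normSq B))
      rw [← hk] at hr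
      have he : 2*((A.re + 1) / (2 * Complex.normSq B))*Complex.normSq B = A.re + 1 := by
        field_simp
      rw [mul_zero] at hr
      nlinarith
  · have h3 : (1/C.re)^2 * Complex.normSq B * C.re = Complex.normSq B / C.re := by
      field_simp
    have h4 : 2*(1/C.re)*Complex.normSq B = 2*(Complex.normSq B/C.re) := by ring
    have h5 : Complex.normSq B / C.re ≤ A.re := by
      have := key (1/C.re)
      rw [h3, h4] at this
      have hd : 0 ≤ Complex.normSq B / C.re := div_nonneg hu hk.le
      linarith
    calc Complex.normSq B = (Complex.normSq B / C.re) * C.re := by field_simp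
    _ ≤ A.re * C.re := by nlinarith

/-- Cauchy–Schwarz inequality for positive sesquilinear maps with values in `L²(Ω, μ)`. -/
theorem cauchy_schwarz_L2 {X Ω : Type*} [AddCommGroup X] [Module ℂ X]
    [MeasurableSpace Ω] (μ : Measure Ω)
    (Φ : X → X → Lp ℂ 2 μ)
    (hadd₁ : ∀ x y z : X, Φ (x + y) z = Φ x z + Φ y z)
    (hsmul₁ : ∀ (c : ℂ) (x y : X), Φ (c • x) y = c • Φ x y)
    (hadd₂ : ∀ x y z : X, Φ x (y + z) = Φ x y + Φ x z)
    (hsmul₂ : ∀ (c : ℂ) (x y : X), Φ x (c • y) = (starRingEnd ℂ c) • Φ x y)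
    (hpos : ∀ x : X, ∀ᵐ t ∂μ, 0 ≤ (Φ x x : Ω → ℂ) t) :
    ∀ x₁ x₂ : X, ‖Φ x₁ x₂‖ ≤ Real.sqrt ‖Φ x₁ x₁‖ * Real.sqrt ‖Φ x₂ x₂‖ := by
  intro x₁ x₂
  set A := Φ x₁ x₁ with hA_def
  set B := Φ x₁ x₂ with hB_def
  set D := Φ x₂ x₁ with hD_def
  set C := Φ x₂ x₂ with hC_def
  have hexp : ∀ c : ℂ, Φ (x₁ + c • x₂) (x₁ + c • x₂)
      = A + (starRingEnd ℂ c) • B + (c • D + (c * starRingEnd ℂ c) • C) := by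
    intro c
    rw [hadd₁, hadd₂, hadd₂, hsmul₂, hsmul₁, hsmul₁, hsmul₂, smul_smul, add_assoc]
  have hpt : ∀ c : ℂ, ∀ᵐ t ∂μ,
      0 ≤ (A : Ω → ℂ) t + (starRingEnd ℂ c) * B t + (c * D t + (c * starRingEnd ℂ c) * C t) := by
    intro c
    have h0 := hpos (x₁ + c • x₂)
    rw [hexp c] at h0
    filter_upwards [h0,
      Lp.coeFn_add (A + (starRingEnd ℂ c) • B) (c • D + (c * starRingEnd ℂ c) • C),
      Lp.coeFn_add A ((starRingEnd ℂ c) • B),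
      Lp.coeFn_add (c • D) ((c * starRingEnd ℂ c) • C),
      Lp.coeFn_smul (starRingEnd ℂ c) B,
      Lp.coeFn_smul c D,
      Lp.coeFn_smul (c * starRingEnd ℂ c) C] with t h0 e1 e2 e3 e4 e5 e6
    rw [e1, Pi.add_apply, e2, e3, Pi.add_apply, Pi.add_apply, e4, e5, e6,
      Pi.smul_apply, Pi.smul_apply, Pi.smul_apply, smul_eq_mul, smul_eq_mul, smul_eq_mul] at h0
    exact h0
  have hae : ∀ᵐ t ∂μ, Complex.normSq ((B : Ω → ℂ) t) ≤ ((A : Ω → ℂ) t).re * ((C : Ω → ℂ) t).re := by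
    have hall : ∀ᵐ t ∂μ, ∀ q : ℚ × ℚ,
        0 ≤ (A : Ω → ℂ) t + (starRingEnd ℂ ((q.1 : ℂ) + (q.2 : ℂ) * Complex.I)) * B t +
          (((q.1 : ℂ) + (q.2 : ℂ) * Complex.I) * D t +
            (((q.1 : ℂ) + (q.2 : ℂ) * Complex.I) * starRingEnd ℂ ((q.1 : ℂ) + (q.2 : ℂ) * Complex.I)) * C t) :=
      ae_all_iff.mpr fun q => hpt _
    filter_upwards [hall, hpos x₁, hpos x₂] with t ht htA htC
    have hAll : ∀ c : ℂ, 0 ≤ (A : Ω → ℂ) t + starRingEnd ℂ c * B t +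
        (c * D t + (c * starRingEnd ℂ c) * C t) := by
      set f : ℂ → ℂ := fun c => (A : Ω → ℂ) t + starRingEnd ℂ c * B t +
        (c * D t + (c * starRingEnd ℂ c) * C t) with hf_def
      have hg : Continuous f := by
        have : Continuous fun c : ℂ => starRingEnd ℂ c := Complex.continuous_conj
        fun_prop
      have hclosed : IsClosed {c : ℂ | 0 ≤ f c} := by
        have hset : {c : ℂ | 0 ≤ f c} = {c | 0 ≤ (f c).re} ∩ {c | 0 = (f c).im} := by
          ext c
          simp [Complex.nonneg_iff, Set.mem_inter_iff]
        rw [hset]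
        exact (isClosed_le continuous_const (Complex.continuous_re.comp hg)).inter
          (isClosed_eq continuous_const (Complex.continuous_im.comp hg))
      intro c
      have hsub : Set.range (fun q : ℚ × ℚ => ((q.1 : ℂ) + (q.2 : ℂ) * Complex.I))
          ⊆ {c : ℂ | 0 ≤ f c} := by
        rintro _ ⟨q, rfl⟩
        exact ht q
      exact hclosed.closure_subset_iff.mpr hsub (denseRange_ratComplex c)
    exact pointwise_cs htA htC hAll
  have hBB := L2.integrable_inner (𝕜 := ℂ) B B
  have hAC := L2.integrable_inner (𝕜 := ℂ) A C
  have hmono : ∫ t, RCLike.re (⟪(B : Ω → ℂ) t, (B : Ω → ℂ) t⟫_ℂ) ∂μ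
      ≤ ∫ t, RCLike.re (⟪(A : Ω → ℂ) t, (C : Ω → ℂ) t⟫_ℂ) ∂μ := by
    refine integral_mono_ae hBB.re hAC.re ?_
    filter_upwards [hae, hpos x₁, hpos x₂] with t h1 h2 h3
    rw [Complex.nonneg_iff] at h2 h3
    simp only [RCLike.inner_apply, RCLike.re_to_complex, Complex.mul_re,
      Complex.conj_re, Complex.conj_im, Complex.normSq_apply] at h1 ⊢
    nlinarith [h1, h2.2, h3.2]
  have hn : ‖B‖^2 ≤ ‖A‖ * ‖C‖ := by
    calc ‖B‖^2 = RCLike.re (⟪B, B⟫_ℂ) := (inner_self_eq_norm_sq (𝕜 := ℂ) B).symm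
    _ = ∫ t, RCLike.re (⟪(B : Ω → ℂ) t, (B : Ω → ℂ) t⟫_ℂ) ∂μ := by
        rw [L2.inner_def, integral_re hBB]
    _ ≤ ∫ t, RCLike.re (⟪(A : Ω → ℂ) t, (C : Ω → ℂ) t⟫_ℂ) ∂μ := hmono
    _ = RCLike.re (⟪A, C⟫_ℂ) := by rw [L2.inner_def, integral_re hAC]
    _ ≤ ‖(⟪A, C⟫_ℂ)‖ := RCLike.re_le_norm _
    _ ≤ ‖A‖ * ‖C‖ := norm_inner_le_norm A C
  have hfin := Real.sqrt_le_sqrt hn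
  rw [Real.sqrt_sq (norm_nonneg B), Real.sqrt_mul (norm_nonneg A)] at hfin
  exact hfin
end

section
/- Let X be a complex vector space, Ω a locally compact Hausdorff space, and M(Ω) the Banach space of complex Radon measures on Ω with the total variation norm. Let Φ : X × X → M(Ω) be a sesquilinear map such that Φ(x,x) is a positive measure for every x ∈ X. Then ‖Φ(x₁,x₂)‖ ≤ ‖Φ(x₁,x₁)‖^{1/2} · ‖Φ(x₂,x₂)‖^{1/2} for all x₁, x₂ ∈ X. -/
open MeasureTheory
open scoped ComplexOrder

/-- The total variation norm of a complex (vector) measure: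
the supremum of `∑ i, |ν (E i)|` over finite families of pairwise disjoint measurable sets. -/
noncomputable def totalVariationNorm {Ω : Type*} [MeasurableSpace Ω]
    (ν : VectorMeasure Ω ℂ) : ℝ :=
  sSup {r : ℝ | ∃ (n : ℕ) (E : Fin n → Set Ω), (∀ i, MeasurableSet (E i)) ∧
    Pairwise (Function.onFun Disjoint E) ∧ r = ∑ i, ‖ν (E i)‖}

/-- Conjugate symmetry for a sesquilinear form with real diagonal. -/
private lemma sesq_conj_symm {X : Type*} [AddCommGroup X] [Module ℂ X]
    (φ : X → X → ℂ)
    (hadd₁ : ∀ x y z : X, φ (x + y) z = φ x z + φ y z)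
    (hsmul₁ : ∀ (c : ℂ) (x y : X), φ (c • x) y = c * φ x y)
    (hadd₂ : ∀ x y z : X, φ x (y + z) = φ x y + φ x z)
    (hsmul₂ : ∀ (c : ℂ) (x y : X), φ x (c • y) = (starRingEnd ℂ c) * φ x y)
    (hreal : ∀ x : X, (φ x x).im = 0) (x y : X) :
    φ y x = (starRingEnd ℂ) (φ x y) := by
  have e1 := hreal (x + y)
  have e2 := hreal (x + Complex.I • y)
  rw [hadd₁, hadd₂, hadd₂] at e1
  rw [hadd₁, hadd₂, hadd₂, hsmul₂, hsmul₁, hsmul₂, hsmul₁] at e2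
  simp only [Complex.add_im, hreal x, hreal y, Complex.conj_I, Complex.mul_im,
    Complex.mul_re, Complex.I_re, Complex.I_im, Complex.neg_re, Complex.neg_im] at e1 e2
  apply Complex.ext
  · simp only [Complex.conj_re]; nlinarith [hreal y]
  · simp only [Complex.conj_im]; nlinarith [hreal y]

/-- Cauchy–Schwarz for a positive sesquilinear complex-valued form. -/
private lemma sesq_cs {X : Type*} [AddCommGroup X] [Module ℂ X]
    (φ : X → X → ℂ)
    (hadd₁ : ∀ x y z : X, φ (x + y) z = φ x z + φ y z)
    (hsmul₁ : ∀ (c : ℂ) (x y : X), φ (c • x) y = c * φ x y)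
    (hadd₂ : ∀ x y z : X, φ x (y + z) = φ x y + φ x z)
    (hsmul₂ : ∀ (c : ℂ) (x y : X), φ x (c • y) = (starRingEnd ℂ c) * φ x y)
    (hpos : ∀ x : X, 0 ≤ φ x x) (x y : X) :
    ‖φ x y‖ ^ 2 ≤ (φ x x).re * (φ y y).re := by
  have hre : ∀ z : X, 0 ≤ (φ z z).re := fun z => (Complex.nonneg_iff.1 (hpos z)).1
  have him : ∀ z : X, (φ z z).im = 0 := fun z => ((Complex.nonneg_iff.1 (hpos z)).2).symm
  have hsym := sesq_conj_symm φ hadd₁ hsmul₁ hadd₂ hsmul₂ him x y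
  by_cases hc : φ x y = 0
  · simp only [hc, map_zero]
    simpa using mul_nonneg (hre x) (hre y)
  · set c : ℝ := ‖φ x y‖ with hcdef
    have hc0 : 0 < c := norm_pos_iff.mpr hc
    have hcC : (c : ℂ) ≠ 0 := by exact_mod_cast hc0.ne'
    have hmc : φ x y * (starRingEnd ℂ) (φ x y) = ((c : ℂ)) ^ 2 := by
      rw [Complex.mul_conj, Complex.normSq_eq_norm_sq]
      norm_cast
    have hq : ∀ t : ℝ, 0 ≤ (φ y y).re * (t * t) + (2 * c) * t + (φ x x).re := by
      intro t
      set s : ℂ := (t : ℂ) * φ x y / (c : ℂ) with hsdef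
      have hexp : φ (x + s • y) (x + s • y)
          = φ x x + ((2 * t * c : ℝ) : ℂ) + ((t * t : ℝ) : ℂ) * φ y y := by
        rw [hadd₁, hadd₂, hadd₂, hsmul₂, hsmul₁, hsmul₂, hsmul₁, hsym]
        rw [hsdef]
        simp only [map_div₀, map_mul, Complex.conj_ofReal]
        field_simp
        ring_nf
        push_cast
        linear_combination (2 * (c : ℂ) * (t : ℂ) + (t : ℂ) ^ 2 * φ y y) * hmc
      have h0 := hpos (x + s • y)
      rw [hexp] at h0
      have hr := (Complex.nonneg_iff.1 h0).1
      simp only [Complex.add_re, Complex.mul_re, Complex.ofReal_re, Complex.ofReal_im,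
        him y, mul_zero, zero_mul, sub_zero] at hr
      linarith
    have hd := discrim_le_zero hq
    rw [discrim] at hd
    have hxx := hre x
    have hyy := hre y
    nlinarith [hd]

/-- Cauchy–Schwarz inequality for positive sesquilinear maps with values in the space `M(Ω)`
of complex Radon measures on a locally compact Hausdorff space, with the total variation norm. -/
theorem cauchy_schwarz_measures {X Ω : Type*} [AddCommGroup X] [Module ℂ X]
    [TopologicalSpace Ω] [LocallyCompactSpace Ω] [T2Space Ω]
    [MeasurableSpace Ω] [BorelSpace Ω]
    (Φ : X → X → VectorMeasure Ω ℂ)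
    (hadd₁ : ∀ x y z : X, Φ (x + y) z = Φ x z + Φ y z)
    (hsmul₁ : ∀ (c : ℂ) (x y : X), Φ (c • x) y = c • Φ x y)
    (hadd₂ : ∀ x y z : X, Φ x (y + z) = Φ x y + Φ x z)
    (hsmul₂ : ∀ (c : ℂ) (x y : X), Φ x (c • y) = (starRingEnd ℂ c) • Φ x y)
    (hpos : ∀ (x : X) (E : Set Ω), MeasurableSet E → 0 ≤ Φ x x E) :
    ∀ x₁ x₂ : X, totalVariationNorm (Φ x₁ x₂) ≤
      Real.sqrt (totalVariationNorm (Φ x₁ x₁)) * Real.sqrt (totalVariationNorm (Φ x₂ x₂)) := by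
  intro x₁ x₂
  have hre : ∀ (x : X) (E : Set Ω), MeasurableSet E → 0 ≤ (Φ x x E).re :=
    fun x E hE => (Complex.nonneg_iff.1 (hpos x E hE)).1
  have habs_diag : ∀ (x : X) (E : Set Ω), MeasurableSet E →
      ‖Φ x x E‖ = (Φ x x E).re :=
    fun x E hE => (Complex.re_eq_norm.2 (hpos x E hE)).symm
  have hCS : ∀ (E : Set Ω), MeasurableSet E →
      ‖Φ x₁ x₂ E‖ ^ 2 ≤ (Φ x₁ x₁ E).re * (Φ x₂ x₂ E).re := by
    intro E hE
    exact sesq_cs (fun u v => Φ u v E)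
      (fun a b d => by simp only [hadd₁, VectorMeasure.add_apply])
      (fun cc a b => by simp only [hsmul₁, VectorMeasure.smul_apply, smul_eq_mul])
      (fun a b d => by simp only [hadd₂, VectorMeasure.add_apply])
      (fun cc a b => by simp only [hsmul₂, VectorMeasure.smul_apply, smul_eq_mul])
      (fun z => hpos z E hE) x₁ x₂
  have hdiag : ∀ (x : X) (n : ℕ) (E : Fin n → Set Ω), (∀ i, MeasurableSet (E i)) →
      Pairwise (Function.onFun Disjoint E) →
      ∑ i, (Φ x x (E i)).re ≤ (Φ x x Set.univ).re := by
    intro x n E hm hd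
    have hU : Φ x x (⋃ i, E i) = ∑ i, Φ x x (E i) := by
      rw [VectorMeasure.of_disjoint_iUnion hm hd, tsum_fintype]
    have hUm : MeasurableSet (⋃ i, E i) := MeasurableSet.iUnion hm
    have hsplit := VectorMeasure.of_add_of_diff (v := Φ x x) hUm MeasurableSet.univ
      (Set.subset_univ _)
    have hrest := hre x (Set.univ \ ⋃ i, E i) (MeasurableSet.univ.diff hUm)
    have hsum : (∑ i, Φ x x (E i)).re = ∑ i, (Φ x x (E i)).re := Complex.re_sum _ _
    calc ∑ i, (Φ x x (E i)).re = (Φ x x (⋃ i, E i)).re := by rw [hU, hsum]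
      _ ≤ (Φ x x Set.univ).re := by
          rw [← hsplit, Complex.add_re]
          linarith
  have hle_tv : ∀ x : X, (Φ x x Set.univ).re ≤ totalVariationNorm (Φ x x) := by
    intro x
    apply le_csSup
    · refine ⟨(Φ x x Set.univ).re, ?_⟩
      rintro r ⟨n, E, hm, hd, rfl⟩
      calc ∑ i, ‖Φ x x (E i)‖ = ∑ i, (Φ x x (E i)).re :=
            Finset.sum_congr rfl fun i _ => habs_diag x (E i) (hm i)
        _ ≤ _ := hdiag x n E hm hd
    · refine ⟨1, fun _ => Set.univ, fun _ => MeasurableSet.univ, ?_, ?_⟩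
      · intro i j hij; exact absurd (Subsingleton.elim i j) hij
      · simp [habs_diag x Set.univ MeasurableSet.univ]
  refine Real.sSup_le ?_ (by positivity)
  rintro r ⟨n, E, hm, hd, rfl⟩
  have ha : ∀ i, 0 ≤ (Φ x₁ x₁ (E i)).re := fun i => hre x₁ (E i) (hm i)
  have hb : ∀ i, 0 ≤ (Φ x₂ x₂ (E i)).re := fun i => hre x₂ (E i) (hm i)
  have h1 : ∑ i, ‖Φ x₁ x₂ (E i)‖ ≤
      ∑ i, Real.sqrt ((Φ x₁ x₁ (E i)).re) * Real.sqrt ((Φ x₂ x₂ (E i)).re) := by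
    refine Finset.sum_le_sum fun i _ => ?_
    rw [← Real.sqrt_mul (ha i)]
    have h2 := hCS (E i) (hm i)
    have := Real.sqrt_le_sqrt h2
    rwa [Real.sqrt_sq (norm_nonneg _)] at this
  have h2 : ∑ i, Real.sqrt ((Φ x₁ x₁ (E i)).re) * Real.sqrt ((Φ x₂ x₂ (E i)).re) ≤
      Real.sqrt (∑ i, (Φ x₁ x₁ (E i)).re) * Real.sqrt (∑ i, (Φ x₂ x₂ (E i)).re) :=
    Real.sum_sqrt_mul_sqrt_le _ ha hb
  have h3 : Real.sqrt (∑ i, (Φ x₁ x₁ (E i)).re) ≤ Real.sqrt (totalVariationNorm (Φ x₁ x₁)) :=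
    Real.sqrt_le_sqrt ((hdiag x₁ n E hm hd).trans (hle_tv x₁))
  have h4 : Real.sqrt (∑ i, (Φ x₂ x₂ (E i)).re) ≤ Real.sqrt (totalVariationNorm (Φ x₂ x₂)) :=
    Real.sqrt_le_sqrt ((hdiag x₂ n E hm hd).trans (hle_tv x₂))
  calc ∑ i, ‖Φ x₁ x₂ (E i)‖ ≤ _ := h1.trans h2
    _ ≤ _ := mul_le_mul h3 h4 (Real.sqrt_nonneg _) (Real.sqrt_nonneg _)
end

section
/- Let X be a complex vector space and μ a measure on a measurable space Ω. Let Φ : X × X → L¹(Ω, μ) be a sesquilinear map such that Φ(x,x) ≥ 0 almost everywhere for every x ∈ X. Then ‖Φ(x₁,x₂)‖₁ ≤ ‖Φ(x₁,x₁)‖₁^{1/2} · ‖Φ(x₂,x₂)‖₁^{1/2} for all x₁, x₂ ∈ X. -/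
open MeasureTheory
open scoped ComplexOrder


lemma ptCS {a b c d : ℂ}
    (h : ∀ z : ℂ, 0 ≤ a + (starRingEnd ℂ z) * b + z * c + (z * starRingEnd ℂ z) * d) :
    ‖b‖ ≤ Real.sqrt ‖a‖ * Real.sqrt ‖d‖ := by
  have key : ∀ z : ℂ, ((a + (starRingEnd ℂ z) * b + z * c + (z * starRingEnd ℂ z) * d).im = 0
      ∧ 0 ≤ (a + (starRingEnd ℂ z) * b + z * c + (z * starRingEnd ℂ z) * d).re) := by
    intro z
    have := h z
    rw [Complex.le_def] at this
    exact ⟨(this.2).symm, by simpa using this.1⟩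
  have ha : a.im = 0 ∧ 0 ≤ a.re := by simpa using key 0
  have h1 := key 1
  have hm1 := key (-1)
  have hI := key Complex.I
  have hd_im : d.im = 0 := by
    simp [Complex.add_im, Complex.mul_im] at h1 hm1 ⊢
    linarith [h1.1, hm1.1, ha.1]
  have hbc_im : b.im + c.im = 0 := by
    simp [Complex.add_im, Complex.mul_im] at h1
    linarith [h1.1, ha.1, hd_im]
  have hbc_re : c.re = b.re := by
    have := hI.1
    simp [Complex.add_im, Complex.mul_im, Complex.mul_re] at this
    linarith [ha.1, hd_im]
  have hc : c = starRingEnd ℂ b := by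
    apply Complex.ext
    · simpa using hbc_re
    · simp; linarith
  have ha' : a = ((a.re : ℝ) : ℂ) := Complex.ext rfl (by simp [ha.1])
  have hd' : d = ((d.re : ℝ) : ℂ) := Complex.ext rfl (by simp [hd_im])
  rcases eq_or_ne b 0 with hb | hb
  · simp [hb]
    positivity
  set nb := ‖b‖ with hnb
  have hnb0 : (0:ℝ) < nb := norm_pos_iff.mpr hb
  have hbb : b * (starRingEnd ℂ) b = (nb : ℂ)^2 := by
    rw [Complex.mul_conj]
    norm_cast
    simp [Complex.normSq_eq_norm_sq, hnb]
  have key2 : ∀ r : ℝ, 0 ≤ d.re * (r*r) + (-(2*nb))*r + a.re := by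
    intro r
    have hk := (key (-(r:ℂ) * (b / nb))).2
    have hE : a + (starRingEnd ℂ) (-(r:ℂ) * (b / nb)) * b + (-(r:ℂ) * (b / nb)) * c
        + ((-(r:ℂ) * (b / nb)) * (starRingEnd ℂ) (-(r:ℂ) * (b / nb))) * d
        = ((d.re * (r*r) + (-(2*nb))*r + a.re : ℝ) : ℂ) := by
      rw [hc]
      nth_rewrite 1 [ha']
      nth_rewrite 1 [hd']
      simp only [map_mul, map_neg, map_div₀, Complex.conj_ofReal]
      have hnbC : (nb : ℂ) ≠ 0 := by exact_mod_cast hnb0.ne'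
      field_simp
      push_cast
      linear_combination (-2*(r:ℂ)*(nb:ℂ) + (r:ℂ)^2*(d.re:ℂ)) * hbb
    rw [hE] at hk
    simpa using hk
  have hdisc := discrim_le_zero key2
  rw [discrim] at hdisc
  have hsq : nb^2 ≤ a.re * d.re := by nlinarith
  have hprod : 0 ≤ a.re * d.re := le_trans (by positivity) hsq
  have : nb ≤ Real.sqrt (a.re * d.re) := by
    rw [show nb = Real.sqrt (nb^2) by rw [Real.sqrt_sq hnb0.le]]
    exact Real.sqrt_le_sqrt hsq
  refine this.trans ?_
  rw [Real.sqrt_mul ha.2]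
  gcongr
  · exact Complex.re_le_norm a
  · exact Complex.re_le_norm d

open scoped ENNReal NNReal

/-- Cauchy–Schwarz inequality for positive sesquilinear maps with values in `L¹(Ω, μ)`. -/
theorem cauchy_schwarz_L1 {X Ω : Type*} [AddCommGroup X] [Module ℂ X]
    [MeasurableSpace Ω] (μ : Measure Ω)
    (Φ : X → X → Lp ℂ 1 μ)
    (hadd₁ : ∀ x y z : X, Φ (x + y) z = Φ x z + Φ y z)
    (hsmul₁ : ∀ (c : ℂ) (x y : X), Φ (c • x) y = c • Φ x y)
    (hadd₂ : ∀ x y z : X, Φ x (y + z) = Φ x y + Φ x z)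
    (hsmul₂ : ∀ (c : ℂ) (x y : X), Φ x (c • y) = (starRingEnd ℂ c) • Φ x y)
    (hpos : ∀ x : X, ∀ᵐ t ∂μ, 0 ≤ (Φ x x : Ω → ℂ) t) :
    ∀ x₁ x₂ : X, ‖Φ x₁ x₂‖ ≤ Real.sqrt ‖Φ x₁ x₁‖ * Real.sqrt ‖Φ x₂ x₂‖ := by
  intro x₁ x₂
  have hexp : ∀ z : ℂ, Φ (x₁ + z • x₂) (x₁ + z • x₂)
      = Φ x₁ x₁ + (starRingEnd ℂ z) • Φ x₁ x₂ + z • Φ x₂ x₁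
        + (z * starRingEnd ℂ z) • Φ x₂ x₂ := by
    intro z
    rw [hadd₁, hsmul₁, hadd₂, hadd₂, hsmul₂, hsmul₂, smul_add, smul_smul]
    abel
  obtain ⟨D, hDc, hDd⟩ := TopologicalSpace.exists_countable_dense ℂ
  have hae : ∀ᵐ t ∂μ, ∀ z ∈ D,
      0 ≤ (Φ x₁ x₁ : Ω → ℂ) t + (starRingEnd ℂ z) * (Φ x₁ x₂ : Ω → ℂ) t
        + z * (Φ x₂ x₁ : Ω → ℂ) t + (z * starRingEnd ℂ z) * (Φ x₂ x₂ : Ω → ℂ) t := by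
    rw [MeasureTheory.ae_ball_iff hDc]
    intro z _
    have h1 := hpos (x₁ + z • x₂)
    rw [hexp z] at h1
    set cz := starRingEnd ℂ z with hcz
    set w := z * starRingEnd ℂ z with hw
    filter_upwards [h1,
      Lp.coeFn_add (Φ x₁ x₁ + cz • Φ x₁ x₂ + z • Φ x₂ x₁) (w • Φ x₂ x₂),
      Lp.coeFn_add (Φ x₁ x₁ + cz • Φ x₁ x₂) (z • Φ x₂ x₁),
      Lp.coeFn_add (Φ x₁ x₁) (cz • Φ x₁ x₂),
      Lp.coeFn_smul cz (Φ x₁ x₂),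
      Lp.coeFn_smul z (Φ x₂ x₁),
      Lp.coeFn_smul w (Φ x₂ x₂)] with t ht e1 e2 e3 e4 e5 e6
    rw [e1, Pi.add_apply, e2, Pi.add_apply, e3, Pi.add_apply, e4, e5, e6] at ht
    simpa [smul_eq_mul] using ht
  have hae2 : ∀ᵐ t ∂μ, ∀ z : ℂ,
      0 ≤ (Φ x₁ x₁ : Ω → ℂ) t + (starRingEnd ℂ z) * (Φ x₁ x₂ : Ω → ℂ) t
        + z * (Φ x₂ x₁ : Ω → ℂ) t + (z * starRingEnd ℂ z) * (Φ x₂ x₂ : Ω → ℂ) t := by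
    filter_upwards [hae] with t ht
    set a := (Φ x₁ x₁ : Ω → ℂ) t
    set b := (Φ x₁ x₂ : Ω → ℂ) t
    set c := (Φ x₂ x₁ : Ω → ℂ) t
    set d := (Φ x₂ x₂ : Ω → ℂ) t
    have hcont : Continuous fun z : ℂ =>
        a + (starRingEnd ℂ z) * b + z * c + (z * starRingEnd ℂ z) * d := by
      simp only [starRingEnd_apply]
      fun_prop
    have hclosed : IsClosed {z : ℂ |
        0 ≤ a + (starRingEnd ℂ z) * b + z * c + (z * starRingEnd ℂ z) * d} := by
      have : {z : ℂ | 0 ≤ a + (starRingEnd ℂ z) * b + z * c + (z * starRingEnd ℂ z) * d}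
          = (fun z : ℂ => (a + (starRingEnd ℂ z) * b + z * c + (z * starRingEnd ℂ z) * d).re) ⁻¹' (Set.Ici 0)
          ∩ (fun z : ℂ => (a + (starRingEnd ℂ z) * b + z * c + (z * starRingEnd ℂ z) * d).im) ⁻¹' {0} := by
        ext z
        simp only [Set.mem_setOf_eq, Set.mem_inter_iff, Set.mem_preimage, Set.mem_Ici,
          Set.mem_singleton_iff, Complex.le_def, Complex.zero_re, Complex.zero_im]
        tauto
      rw [this]
      exact (IsClosed.preimage (Complex.continuous_re.comp hcont) isClosed_Ici).inter
        (IsClosed.preimage (Complex.continuous_im.comp hcont) (isClosed_singleton))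
    intro z
    have : Set.univ ⊆ {z : ℂ |
        0 ≤ a + (starRingEnd ℂ z) * b + z * c + (z * starRingEnd ℂ z) * d} := by
      rw [← hDd.closure_eq]
      exact closure_minimal (fun z hz => ht z hz) hclosed
    exact this (Set.mem_univ z)
  have hpt : ∀ᵐ t ∂μ, ‖(Φ x₁ x₂ : Ω → ℂ) t‖
      ≤ Real.sqrt ‖(Φ x₁ x₁ : Ω → ℂ) t‖ * Real.sqrt ‖(Φ x₂ x₂ : Ω → ℂ) t‖ :=
    hae2.mono fun t ht => ptCS ht
  -- ENNReal bound
  set f11 : Ω → ℂ := ⇑(Φ x₁ x₁)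
  set f12 : Ω → ℂ := ⇑(Φ x₁ x₂)
  set f22 : Ω → ℂ := ⇑(Φ x₂ x₂)
  have hm11 : AEMeasurable (fun t => (‖f11 t‖₊ : ℝ≥0∞) ^ (2⁻¹ : ℝ)) μ :=
    (AEStronglyMeasurable.enorm (Lp.aestronglyMeasurable (Φ x₁ x₁))).pow_const _
  have hm22 : AEMeasurable (fun t => (‖f22 t‖₊ : ℝ≥0∞) ^ (2⁻¹ : ℝ)) μ :=
    (AEStronglyMeasurable.enorm (Lp.aestronglyMeasurable (Φ x₂ x₂))).pow_const _
  have hpt' : ∀ᵐ t ∂μ, (‖f12 t‖₊ : ℝ≥0∞)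
      ≤ (‖f11 t‖₊ : ℝ≥0∞) ^ (2⁻¹ : ℝ) * (‖f22 t‖₊ : ℝ≥0∞) ^ (2⁻¹ : ℝ) := by
    filter_upwards [hpt] with t ht
    rw [← ENNReal.coe_rpow_of_nonneg _ (by norm_num), ← ENNReal.coe_rpow_of_nonneg _ (by norm_num),
      ← ENNReal.coe_mul, ENNReal.coe_le_coe, ← NNReal.coe_le_coe, NNReal.coe_mul,
      NNReal.coe_rpow, NNReal.coe_rpow, coe_nnnorm, coe_nnnorm, coe_nnnorm]
    simpa [Real.sqrt_eq_rpow, one_div] using ht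
  have hconj : Real.HolderConjugate 2 2 := Real.holderConjugate_iff.mpr ⟨by norm_num, by norm_num⟩
  have hint : ∫⁻ t, (‖f12 t‖₊ : ℝ≥0∞) ∂μ
      ≤ (∫⁻ t, (‖f11 t‖₊ : ℝ≥0∞) ∂μ) ^ (2⁻¹ : ℝ) * (∫⁻ t, (‖f22 t‖₊ : ℝ≥0∞) ∂μ) ^ (2⁻¹ : ℝ) := by
    calc ∫⁻ t, (‖f12 t‖₊ : ℝ≥0∞) ∂μ
        ≤ ∫⁻ t, ((fun t => (‖f11 t‖₊ : ℝ≥0∞) ^ (2⁻¹ : ℝ))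
            * fun t => (‖f22 t‖₊ : ℝ≥0∞) ^ (2⁻¹ : ℝ)) t ∂μ := lintegral_mono_ae hpt'
      _ ≤ (∫⁻ t, ((‖f11 t‖₊ : ℝ≥0∞) ^ (2⁻¹ : ℝ)) ^ (2:ℝ) ∂μ) ^ (1/(2:ℝ))
          * (∫⁻ t, ((‖f22 t‖₊ : ℝ≥0∞) ^ (2⁻¹ : ℝ)) ^ (2:ℝ) ∂μ) ^ (1/(2:ℝ)) :=
        ENNReal.lintegral_mul_le_Lp_mul_Lq μ hconj hm11 hm22
      _ = (∫⁻ t, (‖f11 t‖₊ : ℝ≥0∞) ∂μ) ^ (2⁻¹ : ℝ) * (∫⁻ t, (‖f22 t‖₊ : ℝ≥0∞) ∂μ) ^ (2⁻¹ : ℝ) := by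
        have hx : ∀ (x : ℝ≥0∞), (x ^ (2⁻¹:ℝ)) ^ (2:ℝ) = x := fun x => by
          rw [← ENNReal.rpow_mul]; norm_num
        simp only [hx, one_div]
  have e12 : ‖Φ x₁ x₂‖ = (∫⁻ t, (‖f12 t‖₊ : ℝ≥0∞) ∂μ).toReal := by
    rw [Lp.norm_def, eLpNorm_one_eq_lintegral_enorm]; rfl
  have e11 : ‖Φ x₁ x₁‖ = (∫⁻ t, (‖f11 t‖₊ : ℝ≥0∞) ∂μ).toReal := by
    rw [Lp.norm_def, eLpNorm_one_eq_lintegral_enorm]; rfl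
  have e22 : ‖Φ x₂ x₂‖ = (∫⁻ t, (‖f22 t‖₊ : ℝ≥0∞) ∂μ).toReal := by
    rw [Lp.norm_def, eLpNorm_one_eq_lintegral_enorm]; rfl
  have hfin11 : (∫⁻ t, (‖f11 t‖₊ : ℝ≥0∞) ∂μ) ≠ ⊤ := by
    have := Lp.eLpNorm_ne_top (Φ x₁ x₁)
    rw [eLpNorm_one_eq_lintegral_enorm] at this
    exact this
  have hfin22 : (∫⁻ t, (‖f22 t‖₊ : ℝ≥0∞) ∂μ) ≠ ⊤ := by
    have := Lp.eLpNorm_ne_top (Φ x₂ x₂)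
    rw [eLpNorm_one_eq_lintegral_enorm] at this
    exact this
  rw [e12, e11, e22]
  have htop : (∫⁻ t, (‖f11 t‖₊ : ℝ≥0∞) ∂μ) ^ (2⁻¹ : ℝ)
      * (∫⁻ t, (‖f22 t‖₊ : ℝ≥0∞) ∂μ) ^ (2⁻¹ : ℝ) ≠ ⊤ :=
    ENNReal.mul_ne_top (ENNReal.rpow_ne_top_of_nonneg (by norm_num) hfin11)
      (ENNReal.rpow_ne_top_of_nonneg (by norm_num) hfin22)
  refine le_trans (ENNReal.toReal_mono htop hint) (le_of_eq ?_)
  rw [ENNReal.toReal_mul, ← ENNReal.toReal_rpow, ← ENNReal.toReal_rpow,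
    Real.sqrt_eq_rpow, Real.sqrt_eq_rpow, one_div]
end

section
/- Let X be a complex vector space and Y an ordered Banach space with closed positive cone and order-preserving norm (y₁ ≤ y₂ with y₁, y₂ ≥ 0 implies ‖y₁‖ ≤ ‖y₂‖), such that every Y-valued positive sesquilinear map satisfies the Cauchy–Schwarz inequality ‖Φ(x₁,x₂)‖ ≤ ‖Φ(x₁,x₁)‖^{1/2}‖Φ(x₂,x₂)‖^{1/2}. If {Φ_n} is a sequence of positive sesquilinear maps Φ_n : X × X → Y and {x_n}, {x̃_n} sequences in X such that Σ_n Φ_n(x_n,x_n) and Σ_n Φ_n(x̃_n,x̃_n) converge in Y, then Σ_n Φ_n(x_n,x̃_n) converges and ‖Σ_n Φ_n(x_n,x̃_n)‖ ≤ ‖Σ_n Φ_n(x_n,x_n)‖^{1/2} · ‖Σ_n Φ_n(x̃_n,x̃_n)‖^{1/2}. -/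
/-- Cauchy–Schwarz inequality for infinite sums of positive sesquilinear maps with values in
an ordered Banach space `Y` with closed positive cone `K` and order-preserving norm, under the
assumption that every `Y`-valued positive sesquilinear map satisfies the Cauchy–Schwarz
inequality. -/
theorem cauchy_schwarz_infinite_sums {X Y : Type*} [AddCommGroup X] [Module ℂ X]
    [NormedAddCommGroup Y] [NormedSpace ℂ Y] [CompleteSpace Y]
    (K : Set Y) (hKclosed : IsClosed K) (hK0 : (0 : Y) ∈ K)
    (hKadd : ∀ y₁ y₂, y₁ ∈ K → y₂ ∈ K → y₁ + y₂ ∈ K)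
    (hKsmul : ∀ (r : ℝ) (y : Y), 0 ≤ r → y ∈ K → r • y ∈ K)
    (hKpointed : ∀ y, y ∈ K → -y ∈ K → y = 0)
    (hmono : ∀ y₁ y₂, y₁ ∈ K → y₂ - y₁ ∈ K → ‖y₁‖ ≤ ‖y₂‖)
    (hCS : ∀ (N : ℕ) (Ψ : (Fin N → X) → (Fin N → X) → Y),
      (∀ u v w, Ψ (u + v) w = Ψ u w + Ψ v w) →
      (∀ (c : ℂ) u v, Ψ (c • u) v = c • Ψ u v) →
      (∀ u v w, Ψ u (v + w) = Ψ u v + Ψ u w) →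
      (∀ (c : ℂ) u v, Ψ u (c • v) = (starRingEnd ℂ c) • Ψ u v) →
      (∀ u, Ψ u u ∈ K) →
      ∀ u v, ‖Ψ u v‖ ≤ Real.sqrt ‖Ψ u u‖ * Real.sqrt ‖Ψ v v‖)
    (Φ : ℕ → X → X → Y)
    (hadd₁ : ∀ n (x y z : X), Φ n (x + y) z = Φ n x z + Φ n y z)
    (hsmul₁ : ∀ n (c : ℂ) (x y : X), Φ n (c • x) y = c • Φ n x y)
    (hadd₂ : ∀ n (x y z : X), Φ n x (y + z) = Φ n x y + Φ n x z)
    (hsmul₂ : ∀ n (c : ℂ) (x y : X), Φ n x (c • y) = (starRingEnd ℂ c) • Φ n x y)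
    (hpos : ∀ n (x : X), Φ n x x ∈ K)
    (x x' : ℕ → X)
    (hconv : Summable fun n => Φ n (x n) (x n))
    (hconv' : Summable fun n => Φ n (x' n) (x' n)) :
    Summable (fun n => Φ n (x n) (x' n)) ∧
    ‖∑' n, Φ n (x n) (x' n)‖ ≤
      Real.sqrt ‖∑' n, Φ n (x n) (x n)‖ * Real.sqrt ‖∑' n, Φ n (x' n) (x' n)‖ := by
  classical
  -- finite sums of elements of K lie in K
  have hKsum : ∀ {ι : Type} (s : Finset ι) (f : ι → Y),
      (∀ i ∈ s, f i ∈ K) → ∑ i ∈ s, f i ∈ K := by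
    intro ι s f hf
    induction s using Finset.induction_on with
    | empty => simpa using hK0
    | insert _ _ h ih =>
      rw [Finset.sum_insert h]
      exact hKadd _ _ (hf _ (Finset.mem_insert_self _ _))
        (ih fun i hi => hf _ (Finset.mem_insert_of_mem hi))
  -- tsums of elements of K lie in K
  have hKt : ∀ {ι : Type} (f : ι → Y), Summable f → (∀ i, f i ∈ K) → ∑' i, f i ∈ K := by
    intro ι f hf hfK
    exact hKclosed.mem_of_tendsto hf.hasSum
      (Filter.Eventually.of_forall fun s => hKsum s f fun i _ => hfK i)
  -- partial sums are norm-dominated by the tsum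
  have hle : ∀ (g : ℕ → Y), Summable g → (∀ n, g n ∈ K) →
      ∀ s : Finset ℕ, ‖∑ i ∈ s, g i‖ ≤ ‖∑' n, g n‖ := by
    intro g hg hgK s
    refine hmono _ _ (hKsum s g fun i _ => hgK i) ?_
    have h1 : ∑ i ∈ s, g i + ∑' (i : ↥((↑s : Set ℕ)ᶜ)), g i = ∑' n, g n :=
      Summable.sum_add_tsum_subtype_compl hg s
    have h2 : ∑' n, g n - ∑ i ∈ s, g i = ∑' (i : ↥((↑s : Set ℕ)ᶜ)), g i := by
      rw [← h1, add_sub_cancel_left]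
    rw [h2]
    exact hKt _ (hg.subtype _) fun i => hgK i
  -- finite Cauchy–Schwarz over arbitrary finsets
  have key : ∀ s : Finset ℕ, ‖∑ i ∈ s, Φ i (x i) (x' i)‖ ≤
      Real.sqrt ‖∑ i ∈ s, Φ i (x i) (x i)‖ * Real.sqrt ‖∑ i ∈ s, Φ i (x' i) (x' i)‖ := by
    intro s
    obtain ⟨N, hN⟩ : ∃ N, ∀ i ∈ s, i < N :=
      ⟨s.sup id + 1, fun i hi => Nat.lt_succ_of_le (Finset.le_sup (f := id) hi)⟩
    set Ψ : (Fin N → X) → (Fin N → X) → Y :=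
      fun u v => ∑ i : Fin N, if (i : ℕ) ∈ s then Φ i (u i) (v i) else 0 with hΨ
    have h1 : ∀ u v w, Ψ (u + v) w = Ψ u w + Ψ v w := by
      intro u v w
      rw [hΨ, ← Finset.sum_add_distrib]
      refine Finset.sum_congr rfl fun i _ => ?_
      by_cases h : (i : ℕ) ∈ s <;> simp [h, hadd₁, Pi.add_apply]
    have h2 : ∀ (c : ℂ) u v, Ψ (c • u) v = c • Ψ u v := by
      intro c u v
      rw [hΨ, Finset.smul_sum]
      refine Finset.sum_congr rfl fun i _ => ?_
      by_cases h : (i : ℕ) ∈ s <;> simp [h, hsmul₁, Pi.smul_apply]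
    have h3 : ∀ u v w, Ψ u (v + w) = Ψ u v + Ψ u w := by
      intro u v w
      rw [hΨ, ← Finset.sum_add_distrib]
      refine Finset.sum_congr rfl fun i _ => ?_
      by_cases h : (i : ℕ) ∈ s <;> simp [h, hadd₂, Pi.add_apply]
    have h4 : ∀ (c : ℂ) u v, Ψ u (c • v) = (starRingEnd ℂ c) • Ψ u v := by
      intro c u v
      rw [hΨ, Finset.smul_sum]
      refine Finset.sum_congr rfl fun i _ => ?_
      by_cases h : (i : ℕ) ∈ s <;> simp [h, hsmul₂, Pi.smul_apply]
    have h5 : ∀ u, Ψ u u ∈ K := by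
      intro u
      refine hKsum _ _ fun i _ => ?_
      by_cases h : (i : ℕ) ∈ s <;> simp [h, hpos, hK0]
    have hpsi : ∀ (a b : ℕ → X),
        Ψ (fun i => a i) (fun i => b i) = ∑ i ∈ s, Φ i (a i) (b i) := by
      intro a b
      rw [hΨ]
      show (∑ i : Fin N, if (i : ℕ) ∈ s then Φ i (a i) (b i) else 0) = _
      rw [Fin.sum_univ_eq_sum_range (fun j => if j ∈ s then Φ j (a j) (b j) else 0) N]
      rw [Finset.sum_ite_mem]
      congr 1
      exact Finset.inter_eq_right.mpr fun i hi => Finset.mem_range.mpr (hN i hi)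
    have := hCS N Ψ h1 h2 h3 h4 h5 (fun i => x i) (fun i => x' i)
    rwa [hpsi x x', hpsi x x, hpsi x' x'] at this
  -- summability of the cross sum
  have hsummable : Summable (fun n => Φ n (x n) (x' n)) := by
    rw [summable_iff_vanishing]
    intro e he
    obtain ⟨ε, hε, hsub⟩ := Metric.mem_nhds_iff.mp he
    set C := Real.sqrt ‖∑' n, Φ n (x' n) (x' n)‖ with hC
    have hC0 : 0 ≤ C := Real.sqrt_nonneg _
    set δ := (ε / (C + 1)) ^ 2 with hδ
    have hδpos : 0 < δ := by positivity
    have hsqrtδ : Real.sqrt δ = ε / (C + 1) := by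
      rw [hδ, Real.sqrt_sq (by positivity)]
    obtain ⟨s₁, hs₁⟩ := (summable_iff_vanishing.mp hconv) (Metric.ball 0 δ)
      (Metric.ball_mem_nhds 0 hδpos)
    refine ⟨s₁, fun t ht => ?_⟩
    apply hsub
    rw [Metric.mem_ball, dist_zero_right]
    have hxx : ‖∑ i ∈ t, Φ i (x i) (x i)‖ < δ := by
      have := hs₁ t ht
      rwa [Metric.mem_ball, dist_zero_right] at this
    calc ‖∑ i ∈ t, Φ i (x i) (x' i)‖
        ≤ Real.sqrt ‖∑ i ∈ t, Φ i (x i) (x i)‖ *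
            Real.sqrt ‖∑ i ∈ t, Φ i (x' i) (x' i)‖ := key t
      _ ≤ Real.sqrt δ * C := by
          apply mul_le_mul
          · exact le_of_lt (Real.sqrt_lt_sqrt (norm_nonneg _) hxx)
          · exact Real.sqrt_le_sqrt (hle _ hconv' (fun n => hpos n (x' n)) t)
          · exact Real.sqrt_nonneg _
          · rw [hsqrtδ]; positivity
      _ = ε * C / (C + 1) := by rw [hsqrtδ]; ring
      _ < ε := by
          rw [div_lt_iff₀ (by positivity)]
          nlinarith
  refine ⟨hsummable, ?_⟩
  -- pass to the limit in the finite Cauchy–Schwarz inequality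
  have hbound : ∀ s : Finset ℕ, ‖∑ i ∈ s, Φ i (x i) (x' i)‖ ≤
      Real.sqrt ‖∑' n, Φ n (x n) (x n)‖ * Real.sqrt ‖∑' n, Φ n (x' n) (x' n)‖ := by
    intro s
    refine (key s).trans ?_
    exact mul_le_mul
      (Real.sqrt_le_sqrt (hle _ hconv (fun n => hpos n (x n)) s))
      (Real.sqrt_le_sqrt (hle _ hconv' (fun n => hpos n (x' n)) s))
      (Real.sqrt_nonneg _) (Real.sqrt_nonneg _)
  have htend : Filter.Tendsto (fun s : Finset ℕ => ‖∑ i ∈ s, Φ i (x i) (x' i)‖)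
      Filter.atTop (nhds ‖∑' n, Φ n (x n) (x' n)‖) :=
    (continuous_norm.continuousAt).tendsto.comp hsummable.hasSum
  exact le_of_tendsto htend (Filter.Eventually.of_forall hbound)
end

section
/- Let X be a Banach space, Γ : X × X → X a bounded sesquilinear map, (A, A₀) a unital normed quasi *-algebra, and Y an ordered Banach space for which Cauchy–Schwarz holds for positive sesquilinear maps. Suppose Φ : A × A → B(X, Y) is a bounded left-invariant sesquilinear map which is completely positive with respect to Γ, and suppose the unit ball B₁ of X satisfies Γ(B₁ × B₁) = B₁. Then for all a, b ∈ A: ‖Φ(a,b)‖ ≤ ‖Φ(a,a)‖^{1/2} · ‖Φ(b,b)‖^{1/2} (operator norms in B(X,Y)). -/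
open scoped TensorProduct

section ConjHomAux

/-- Type synonym for `(A ⊗[ℂ] X) →ₗ[ℂ] Y` carrying the conjugated `ℂ`-module structure. -/
private def ConjHom (A X Y : Type*) [AddCommGroup A] [Module ℂ A]
    [AddCommGroup X] [Module ℂ X] [AddCommGroup Y] [Module ℂ Y] : Type _ :=
  (A ⊗[ℂ] X) →ₗ[ℂ] Y

namespace ConjHom

variable {A X Y : Type*} [AddCommGroup A] [Module ℂ A]
    [AddCommGroup X] [Module ℂ X] [AddCommGroup Y] [Module ℂ Y]

noncomputable instance : AddCommGroup (ConjHom A X Y) :=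
  inferInstanceAs (AddCommGroup ((A ⊗[ℂ] X) →ₗ[ℂ] Y))

noncomputable instance : Module ℂ (ConjHom A X Y) :=
  Module.compHom ((A ⊗[ℂ] X) →ₗ[ℂ] Y) (starRingEnd ℂ)

private def of (f : (A ⊗[ℂ] X) →ₗ[ℂ] Y) : ConjHom A X Y := f

private def un (f : ConjHom A X Y) : (A ⊗[ℂ] X) →ₗ[ℂ] Y := f

private lemma un_of (f : (A ⊗[ℂ] X) →ₗ[ℂ] Y) : un (of f : ConjHom A X Y) = f := rfl

private lemma un_add (f g : ConjHom A X Y) : un (f + g) = un f + un g := rfl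

private lemma un_smul (c : ℂ) (f : ConjHom A X Y) :
    un (c • f) = (starRingEnd ℂ c) • un f := rfl

end ConjHom

end ConjHomAux


section PsiAux

variable {A X Y : Type*} [NormedRing A] [NormedAlgebra ℂ A]
    [NormedAddCommGroup X] [NormedSpace ℂ X]
    [NormedAddCommGroup Y] [NormedSpace ℂ Y]
    (Γ : X → X → X)
    (hΓadd₁ : ∀ x y z : X, Γ (x + y) z = Γ x z + Γ y z)
    (hΓsmul₁ : ∀ (c : ℂ) (x y : X), Γ (c • x) y = c • Γ x y)
    (hΓadd₂ : ∀ x y z : X, Γ x (y + z) = Γ x y + Γ x z)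
    (hΓsmul₂ : ∀ (c : ℂ) (x y : X), Γ x (c • y) = (starRingEnd ℂ c) • Γ x y)
    (Φ : A → A → (X →L[ℂ] Y))
    (hadd₁ : ∀ a b c : A, Φ (a + b) c = Φ a c + Φ b c)
    (hsmul₁ : ∀ (c : ℂ) (a b : A), Φ (c • a) b = c • Φ a b)
    (hadd₂ : ∀ a b c : A, Φ a (b + c) = Φ a b + Φ a c)
    (hsmul₂ : ∀ (c : ℂ) (a b : A), Φ a (c • b) = (starRingEnd ℂ c) • Φ a b)

/-- For fixed `(b, y)`, the bilinear map `(a, x) ↦ Φ a b (Γ x y)` lifted to the tensor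
product. -/
private noncomputable def psiAuxH (b : A) (y : X) : (A ⊗[ℂ] X) →ₗ[ℂ] Y :=
  TensorProduct.lift (LinearMap.mk₂ ℂ (fun a x => Φ a b (Γ x y))
    (fun a a' x => by
      show Φ (a + a') b (Γ x y) = Φ a b (Γ x y) + Φ a' b (Γ x y)
      rw [hadd₁]; rfl)
    (fun c a x => by
      show Φ (c • a) b (Γ x y) = c • Φ a b (Γ x y)
      rw [hsmul₁]; rfl)
    (fun a x x' => by
      show Φ a b (Γ (x + x') y) = Φ a b (Γ x y) + Φ a b (Γ x' y)
      rw [hΓadd₁, map_add])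
    (fun c a x => by
      show Φ a b (Γ (c • x) y) = c • Φ a b (Γ x y)
      rw [hΓsmul₁, map_smul]))

private lemma psiAuxH_tmul (b : A) (y : X) (a : A) (x : X) :
    psiAuxH Γ hΓadd₁ hΓsmul₁ Φ hadd₁ hsmul₁ b y (a ⊗ₜ[ℂ] x) = Φ a b (Γ x y) := rfl

/-- The map `(b, y) ↦ psiAuxH b y`, bilinear into the conjugated hom space. -/
private noncomputable def psiAuxG : A →ₗ[ℂ] X →ₗ[ℂ] ConjHom A X Y :=
  LinearMap.mk₂ ℂ (fun b y => ConjHom.of (psiAuxH Γ hΓadd₁ hΓsmul₁ Φ hadd₁ hsmul₁ b y))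
    (fun b b' y => by
      show ConjHom.of _ = ConjHom.of (psiAuxH Γ hΓadd₁ hΓsmul₁ Φ hadd₁ hsmul₁ b y
        + psiAuxH Γ hΓadd₁ hΓsmul₁ Φ hadd₁ hsmul₁ b' y)
      refine congrArg ConjHom.of (TensorProduct.ext' fun a x => ?_)
      show Φ a (b + b') (Γ x y) = Φ a b (Γ x y) + Φ a b' (Γ x y)
      rw [hadd₂]; rfl)
    (fun c b y => by
      show ConjHom.of _ = ConjHom.of ((starRingEnd ℂ c)
        • psiAuxH Γ hΓadd₁ hΓsmul₁ Φ hadd₁ hsmul₁ b y)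
      refine congrArg ConjHom.of (TensorProduct.ext' fun a x => ?_)
      show Φ a (c • b) (Γ x y) = (starRingEnd ℂ c) • Φ a b (Γ x y)
      rw [hsmul₂]; rfl)
    (fun b y y' => by
      show ConjHom.of _ = ConjHom.of (psiAuxH Γ hΓadd₁ hΓsmul₁ Φ hadd₁ hsmul₁ b y
        + psiAuxH Γ hΓadd₁ hΓsmul₁ Φ hadd₁ hsmul₁ b y')
      refine congrArg ConjHom.of (TensorProduct.ext' fun a x => ?_)
      show Φ a b (Γ x (y + y')) = Φ a b (Γ x y) + Φ a b (Γ x y')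
      rw [hΓadd₂, map_add])
    (fun c b y => by
      show ConjHom.of _ = ConjHom.of ((starRingEnd ℂ c)
        • psiAuxH Γ hΓadd₁ hΓsmul₁ Φ hadd₁ hsmul₁ b y)
      refine congrArg ConjHom.of (TensorProduct.ext' fun a x => ?_)
      show Φ a b (Γ x (c • y)) = (starRingEnd ℂ c) • Φ a b (Γ x y)
      rw [hΓsmul₂, map_smul])

/-- The sesquilinear map `Ψ` on `A ⊗[ℂ] X` induced by `Φ` and `Γ`. -/
private noncomputable def psiAux (u v : A ⊗[ℂ] X) : Y :=
  ConjHom.un (TensorProduct.lift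
    (psiAuxG Γ hΓadd₁ hΓsmul₁ hΓadd₂ hΓsmul₂ Φ hadd₁ hsmul₁ hadd₂ hsmul₂) v) u

private lemma psiAux_tmul (a b : A) (x y : X) :
    psiAux Γ hΓadd₁ hΓsmul₁ hΓadd₂ hΓsmul₂ Φ hadd₁ hsmul₁ hadd₂ hsmul₂
      (a ⊗ₜ[ℂ] x) (b ⊗ₜ[ℂ] y) = Φ a b (Γ x y) := rfl

end PsiAux

/-- Operator-norm Cauchy–Schwarz inequality for a bounded, left-invariant sesquilinear map
`Φ : A × A → B(X,Y)` on a unital normed quasi *-algebra `(A, A₀)` which is completely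
positive with respect to a bounded sesquilinear map `Γ : X × X → X` whose image of the unit
ball times the unit ball is the unit ball, where `Y` is an ordered Banach space for which the
Cauchy–Schwarz inequality holds for `Y`-valued positive sesquilinear maps. -/
theorem operator_norm_cauchy_schwarz {A X Y : Type*}
    [NormedRing A] [StarRing A] [NormedAlgebra ℂ A] [StarModule ℂ A]
    [NormedAddCommGroup X] [NormedSpace ℂ X] [CompleteSpace X]
    [NormedAddCommGroup Y] [NormedSpace ℂ Y] [CompleteSpace Y]
    (A₀ : StarSubalgebra ℂ A)
    (K : Set Y) (hKclosed : IsClosed K) (hK0 : (0 : Y) ∈ K)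
    (hKadd : ∀ y₁ y₂, y₁ ∈ K → y₂ ∈ K → y₁ + y₂ ∈ K)
    (hKsmul : ∀ (r : ℝ) (y : Y), 0 ≤ r → y ∈ K → r • y ∈ K)
    (hKpointed : ∀ y, y ∈ K → -y ∈ K → y = 0)
    -- Cauchy–Schwarz holds for `Y`-valued positive sesquilinear maps
    (hCS : ∀ (Ψ : (A ⊗[ℂ] X) → (A ⊗[ℂ] X) → Y),
      (∀ u v w, Ψ (u + v) w = Ψ u w + Ψ v w) →
      (∀ (c : ℂ) u v, Ψ (c • u) v = c • Ψ u v) →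
      (∀ u v w, Ψ u (v + w) = Ψ u v + Ψ u w) →
      (∀ (c : ℂ) u v, Ψ u (c • v) = (starRingEnd ℂ c) • Ψ u v) →
      (∀ u, Ψ u u ∈ K) →
      ∀ u v, ‖Ψ u v‖ ≤ Real.sqrt ‖Ψ u u‖ * Real.sqrt ‖Ψ v v‖)
    -- `Γ` is a bounded sesquilinear map on `X`
    (Γ : X → X → X)
    (hΓadd₁ : ∀ x y z : X, Γ (x + y) z = Γ x z + Γ y z)
    (hΓsmul₁ : ∀ (c : ℂ) (x y : X), Γ (c • x) y = c • Γ x y)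
    (hΓadd₂ : ∀ x y z : X, Γ x (y + z) = Γ x y + Γ x z)
    (hΓsmul₂ : ∀ (c : ℂ) (x y : X), Γ x (c • y) = (starRingEnd ℂ c) • Γ x y)
    (hΓbdd : ∃ CΓ : ℝ, ∀ x y : X, ‖Γ x y‖ ≤ CΓ * ‖x‖ * ‖y‖)
    (hΓball : Set.image2 Γ (Metric.closedBall (0 : X) 1) (Metric.closedBall (0 : X) 1) =
      Metric.closedBall (0 : X) 1)
    -- `Φ` is a bounded, left-invariant sesquilinear map, completely positive w.r.t. `Γ`
    (Φ : A → A → (X →L[ℂ] Y))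
    (hadd₁ : ∀ a b c : A, Φ (a + b) c = Φ a c + Φ b c)
    (hsmul₁ : ∀ (c : ℂ) (a b : A), Φ (c • a) b = c • Φ a b)
    (hadd₂ : ∀ a b c : A, Φ a (b + c) = Φ a b + Φ a c)
    (hsmul₂ : ∀ (c : ℂ) (a b : A), Φ a (c • b) = (starRingEnd ℂ c) • Φ a b)
    (hbdd : ∃ Mb : ℝ, ∀ a b : A, ‖Φ a b‖ ≤ Mb * ‖a‖ * ‖b‖)
    (hinv : ∀ (a : A) (c d : A), c ∈ A₀ → d ∈ A₀ → Φ (a * c) d = Φ c (star a * d))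
    (hcp : ∀ (n : ℕ) (a : Fin n → A) (x : Fin n → X),
      (∑ i, ∑ j, Φ (a i) (a j) (Γ (x i) (x j))) ∈ K) :
    ∀ a b : A, ‖Φ a b‖ ≤ Real.sqrt ‖Φ a a‖ * Real.sqrt ‖Φ b b‖ := by
  set Ψ : (A ⊗[ℂ] X) → (A ⊗[ℂ] X) → Y :=
    psiAux Γ hΓadd₁ hΓsmul₁ hΓadd₂ hΓsmul₂ Φ hadd₁ hsmul₁ hadd₂ hsmul₂ with hΨdef
  set L : (A ⊗[ℂ] X) →ₗ[ℂ] ConjHom A X Y :=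
    TensorProduct.lift (psiAuxG Γ hΓadd₁ hΓsmul₁ hΓadd₂ hΓsmul₂ Φ hadd₁ hsmul₁ hadd₂ hsmul₂)
    with hLdef
  have hΨL : ∀ u v, Ψ u v = ConjHom.un (L v) u := fun u v => rfl
  have hΨ_tmul : ∀ (a b : A) (x y : X),
      Ψ (a ⊗ₜ[ℂ] x) (b ⊗ₜ[ℂ] y) = Φ a b (Γ x y) :=
    psiAux_tmul Γ hΓadd₁ hΓsmul₁ hΓadd₂ hΓsmul₂ Φ hadd₁ hsmul₁ hadd₂ hsmul₂
  have P1 : ∀ u v w, Ψ (u + v) w = Ψ u w + Ψ v w := fun u v w =>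
    (ConjHom.un (L w)).map_add u v
  have P2 : ∀ (c : ℂ) u v, Ψ (c • u) v = c • Ψ u v := fun c u v =>
    (ConjHom.un (L v)).map_smul c u
  have P3 : ∀ u v w, Ψ u (v + w) = Ψ u v + Ψ u w := by
    intro u v w
    rw [hΨL, L.map_add, ConjHom.un_add]
    rfl
  have P4 : ∀ (c : ℂ) u v, Ψ u (c • v) = (starRingEnd ℂ c) • Ψ u v := by
    intro c u v
    rw [hΨL, L.map_smul, ConjHom.un_smul]
    rfl
  have P5 : ∀ u, Ψ u u ∈ K := by
    intro u
    obtain ⟨S, hS⟩ := TensorProduct.exists_finset u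
    set n := S.card with hn
    set e : Fin n ≃ {p // p ∈ S} := S.equivFin.symm with he
    set av : Fin n → A := fun i => ((e i : A × X)).1 with hav
    set xv : Fin n → X := fun i => ((e i : A × X)).2 with hxv
    have hu : u = ∑ i : Fin n, av i ⊗ₜ[ℂ] xv i := by
      rw [hS, ← Finset.sum_coe_sort S (fun p => p.1 ⊗ₜ[ℂ] p.2)]
      exact (Equiv.sum_comp e (fun p : {p // p ∈ S} =>
        (p : A × X).1 ⊗ₜ[ℂ] (p : A × X).2)).symm
    have key : Ψ u u = ∑ i : Fin n, ∑ j : Fin n, Φ (av i) (av j) (Γ (xv i) (xv j)) := by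
      have e2 : ∀ v, Ψ u v = ∑ i : Fin n, Ψ (av i ⊗ₜ[ℂ] xv i) v := by
        intro v
        conv_lhs => rw [hu]
        exact map_sum (AddMonoidHom.mk' (fun w => Ψ w v) (fun p q => P1 p q v)) _ _
      have e1 : ∀ w, Ψ w u = ∑ j : Fin n, Ψ w (av j ⊗ₜ[ℂ] xv j) := by
        intro w
        conv_lhs => rw [hu]
        exact map_sum (AddMonoidHom.mk' (fun v => Ψ w v) (fun p q => P3 w p q)) _ _
      rw [e2 u]
      refine Finset.sum_congr rfl (fun i _ => ?_)
      rw [e1 (av i ⊗ₜ[ℂ] xv i)]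
      refine Finset.sum_congr rfl (fun j _ => ?_)
      exact hΨ_tmul (av i) (av j) (xv i) (xv j)
    rw [key]
    exact hcp n av xv
  have keyCS := hCS Ψ P1 P2 P3 P4 P5
  -- Step 3: deduce the operator norm inequality
  intro a b
  refine ContinuousLinearMap.opNorm_le_bound _
    (mul_nonneg (Real.sqrt_nonneg _) (Real.sqrt_nonneg _)) (fun x => ?_)
  rcases eq_or_ne x 0 with rfl | hx
  · simp
  · have hxpos : (0 : ℝ) < ‖x‖ := norm_pos_iff.mpr hx
    set z : X := (‖x‖ : ℝ)⁻¹ • x with hz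
    have hzball : z ∈ Metric.closedBall (0 : X) 1 := by
      simp only [Metric.mem_closedBall, dist_zero_right, hz, norm_smul, norm_inv,
        norm_norm]
      rw [inv_mul_cancel₀ (ne_of_gt hxpos)]
    rw [← hΓball] at hzball
    obtain ⟨x₁, hx₁, x₂, hx₂, hx₁₂⟩ := Set.mem_image2.mp hzball
    have hΓ₁ : Γ x₁ x₁ ∈ Metric.closedBall (0 : X) 1 := by
      rw [← hΓball]; exact Set.mem_image2_of_mem hx₁ hx₁
    have hΓ₂ : Γ x₂ x₂ ∈ Metric.closedBall (0 : X) 1 := by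
      rw [← hΓball]; exact Set.mem_image2_of_mem hx₂ hx₂
    have hz_norm : ‖Φ a b z‖ ≤ Real.sqrt ‖Φ a a‖ * Real.sqrt ‖Φ b b‖ := by
      have h1 : ‖Φ a b z‖ = ‖Ψ (a ⊗ₜ[ℂ] x₁) (b ⊗ₜ[ℂ] x₂)‖ := by
        rw [hΨ_tmul, hx₁₂]
      have h2 := keyCS (a ⊗ₜ[ℂ] x₁) (b ⊗ₜ[ℂ] x₂)
      rw [hΨ_tmul, hΨ_tmul] at h2
      have h3 : ‖Φ a a (Γ x₁ x₁)‖ ≤ ‖Φ a a‖ := by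
        calc ‖Φ a a (Γ x₁ x₁)‖ ≤ ‖Φ a a‖ * ‖Γ x₁ x₁‖ := (Φ a a).le_opNorm _
        _ ≤ ‖Φ a a‖ * 1 := by
            refine mul_le_mul_of_nonneg_left ?_ (norm_nonneg _)
            simpa [Metric.mem_closedBall, dist_zero_right] using hΓ₁
        _ = ‖Φ a a‖ := mul_one _
      have h4 : ‖Φ b b (Γ x₂ x₂)‖ ≤ ‖Φ b b‖ := by
        calc ‖Φ b b (Γ x₂ x₂)‖ ≤ ‖Φ b b‖ * ‖Γ x₂ x₂‖ := (Φ b b).le_opNorm _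
        _ ≤ ‖Φ b b‖ * 1 := by
            refine mul_le_mul_of_nonneg_left ?_ (norm_nonneg _)
            simpa [Metric.mem_closedBall, dist_zero_right] using hΓ₂
        _ = ‖Φ b b‖ := mul_one _
      calc ‖Φ a b z‖ ≤ Real.sqrt ‖Φ a a (Γ x₁ x₁)‖ * Real.sqrt ‖Φ b b (Γ x₂ x₂)‖ := by
            rw [h1]; exact h2
      _ ≤ Real.sqrt ‖Φ a a‖ * Real.sqrt ‖Φ b b‖ :=
          mul_le_mul (Real.sqrt_le_sqrt h3) (Real.sqrt_le_sqrt h4)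
            (Real.sqrt_nonneg _) (Real.sqrt_nonneg _)
    have hxz : x = (‖x‖ : ℝ) • z := by
      rw [hz, smul_smul, mul_inv_cancel₀ (ne_of_gt hxpos), one_smul]
    calc ‖Φ a b x‖ = ‖x‖ * ‖Φ a b z‖ := by
          conv_lhs => rw [hxz]
          rw [(Φ a b).map_smul_of_tower, norm_smul, Real.norm_of_nonneg (norm_nonneg x)]
    _ ≤ ‖x‖ * (Real.sqrt ‖Φ a a‖ * Real.sqrt ‖Φ b b‖) :=
        mul_le_mul_of_nonneg_left hz_norm (norm_nonneg x)
    _ = Real.sqrt ‖Φ a a‖ * Real.sqrt ‖Φ b b‖ * ‖x‖ := by ring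
end
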